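/- In the twisted Laurent series division ring Δ = Δ_{2r}(k; n₁,…,n_r) with ω_m ∈ k of multiplicative order m = lcm(n_i), no primitive root of unity in k of order strictly greater than m can be a multiplicative commutator in Δ*. In particular, if all n_i = p then ω_{p²} is not of the form t a t⁻¹ a⁻¹ for t, a ∈ Δ*. -/

import Mathlib

namespace AmitsurNote

noncomputable instance instLinOrdLexPi (r : ℕ) : LinearOrder (Lex (Fin r → ℤ)) :=
  letI : WellFoundedLT (Fin r) := inferInstance
  inferInstance

noncomputable instance instLOACGLexPi (r : ℕ) : IsOrderedAddMonoid (Lex (Fin r → ℤ)) := by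
  first
  | exact inferInstance
  | exact { add_le_add_left := fun _ _ h c => add_le_add_left h c }

noncomputable instance instMinLexPi (r : ℕ) : Min (Lex (Fin r → ℤ)) :=
  (instLinOrdLexPi r).toMin

/-- An abstract model of the iterated twisted Laurent series division ring
`Δ = Δ_{2r}(k; n₁,…,n_r)` together with its natural valuation `v` with values in the
lexicographically ordered group `ℤ^{2r}`: every series is `a·x^α·(1 + d)` with `a ∈ k*`,
`α = v(f)`, and `v(d) > 0`; the monomials `x^α` multiply up to powers of the fixed root of
unity `ω = ω_m`. -/
structure TwistedLaurentValuedModel (k : Type*) [Field k] (r : ℕ) (ω : k) where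
  Δ : Type*
  [instΔ : DivisionRing Δ]
  ι : k →+* Δ
  central : ∀ (a : k) (z : Δ), ι a * z = z * ι a
  /-- the unit `ω_m` of `Δ`. -/
  ωu : Δˣ
  hωu : (ωu : Δ) = ι ω
  /-- the natural valuation of `Δ` (with junk value at `0`). -/
  v : Δ → Lex (Fin (2 * r) → ℤ)
  v_mul : ∀ x y : Δ, x ≠ 0 → y ≠ 0 → v (x * y) = v x + v y
  v_add : ∀ x y : Δ, x ≠ 0 → y ≠ 0 → x + y ≠ 0 → min (v x) (v y) ≤ v (x + y)
  v_scalar : ∀ a : k, a ≠ 0 → v (ι a) = 0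
  /-- the monomial `x^α`. -/
  M : (Fin (2 * r) → ℤ) → Δˣ
  v_M : ∀ α, v (M α) = toLex α
  M_twist : ∀ α β, ∃ e : ℤ, M α * M β = ωu ^ e * M (α + β)
  factor : ∀ u : Δˣ, ∃ (a : k) (α : Fin (2 * r) → ℤ) (d : Δ),
    (d = 0 ∨ 0 < v d) ∧ (u : Δ) = ι a * (M α : Δ) * (1 + d)

attribute [instance] TwistedLaurentValuedModel.instΔ


section Aux

variable {k : Type*} [Field k] {r : ℕ} {ω : k} (T : TwistedLaurentValuedModel k r ω)

/-- `d` is zero or has positive valuation. -/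
def Pos (d : T.Δ) : Prop := d = 0 ∨ 0 < T.v d

lemma ι_ne_zero {a : k} (ha : a ≠ 0) : T.ι a ≠ 0 :=
  fun h => ha (T.ι.injective (by simpa using h))

lemma v_one : T.v 1 = 0 := by
  have h := T.v_scalar 1 one_ne_zero
  rwa [map_one] at h

lemma v_smul {a : k} (ha : a ≠ 0) {x : T.Δ} (hx : x ≠ 0) : T.v (T.ι a * x) = T.v x := by
  rw [T.v_mul _ _ (ι_ne_zero T ha) hx, T.v_scalar a ha, zero_add]

lemma v_neg {x : T.Δ} (hx : x ≠ 0) : T.v (-x) = T.v x := by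
  have h1 : (-x) = T.ι (-1) * x := by rw [map_neg, map_one, neg_one_mul]
  rw [h1, v_smul T (by norm_num) hx]

lemma one_add_ne_zero {d : T.Δ} (hd : Pos T d) : (1 : T.Δ) + d ≠ 0 := by
  rcases hd with rfl | hd
  · simp
  · intro h
    have hd1 : d = -1 := eq_neg_of_add_eq_zero_right h
    rw [hd1, v_neg T one_ne_zero, v_one T] at hd
    exact lt_irrefl _ hd

lemma v_one_add {d : T.Δ} (hd : Pos T d) : T.v (1 + d) = 0 := by
  rcases hd with rfl | hd
  · simpa using v_one T
  · by_cases hd0 : d = 0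
    · subst hd0; simpa using v_one T
    have hne : (1 : T.Δ) + d ≠ 0 := one_add_ne_zero T (Or.inr hd)
    have hub : T.v (1 + d) ≤ 0 := by
      have hsum : (1 + d) + (-d) = 1 := by abel
      have h2 := T.v_add (1 + d) (-d) hne (neg_ne_zero.mpr hd0)
        (by rw [hsum]; exact one_ne_zero)
      rw [hsum, v_one T] at h2
      rcases min_le_iff.mp h2 with h3 | h3
      · exact h3
      · rw [v_neg T hd0] at h3; exact absurd h3 (not_le.mpr hd)
    have hlb : (0 : Lex (Fin (2 * r) → ℤ)) ≤ T.v (1 + d) := by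
      have h2 := T.v_add 1 d one_ne_zero hd0 hne
      rw [v_one T] at h2
      exact le_trans (le_min le_rfl hd.le) h2
    exact le_antisymm hub hlb

lemma pos_add {x y : T.Δ} (hx : Pos T x) (hy : Pos T y) : Pos T (x + y) := by
  rcases hx with rfl | hx
  · rwa [zero_add]
  rcases hy with rfl | hy
  · rw [add_zero]; exact Or.inr hx
  by_cases hx0 : x = 0
  · subst hx0; rw [zero_add]; exact Or.inr hy
  by_cases hy0 : y = 0
  · subst hy0; rw [add_zero]; exact Or.inr hx
  by_cases hxy : x + y = 0
  · exact Or.inl hxy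
  · exact Or.inr (lt_of_lt_of_le (lt_min hx hy) (T.v_add x y hx0 hy0 hxy))

lemma pos_mul {x y : T.Δ} (hx : Pos T x) (hy : Pos T y) : Pos T (x * y) := by
  rcases hx with rfl | hx
  · rw [zero_mul]; exact Or.inl rfl
  rcases hy with rfl | hy
  · rw [mul_zero]; exact Or.inl rfl
  by_cases hx0 : x = 0
  · subst hx0; rw [zero_mul]; exact Or.inl rfl
  by_cases hy0 : y = 0
  · subst hy0; rw [mul_zero]; exact Or.inl rfl
  exact Or.inr (by rw [T.v_mul x y hx0 hy0]; exact add_pos hx hy)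

lemma pos_smul (c : k) {d : T.Δ} (hd : Pos T d) : Pos T (T.ι c * d) := by
  by_cases hc : c = 0
  · subst hc; rw [map_zero, zero_mul]; exact Or.inl rfl
  rcases hd with rfl | hd
  · rw [mul_zero]; exact Or.inl rfl
  by_cases hd0 : d = 0
  · subst hd0; rw [mul_zero]; exact Or.inl rfl
  exact Or.inr (by rwa [v_smul T hc hd0])

lemma v_conj (α : Fin (2 * r) → ℤ) {d : T.Δ} (hd0 : d ≠ 0) :
    T.v ((↑(T.M α)⁻¹ : T.Δ) * (d * (T.M α : T.Δ))) = T.v d := by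
  have hMne : ((T.M α : T.Δ)) ≠ 0 := Units.ne_zero _
  have hMine : ((↑(T.M α)⁻¹ : T.Δ)) ≠ 0 := Units.ne_zero _
  have hvi : T.v (↑(T.M α)⁻¹ : T.Δ) = -toLex α := by
    have h1 : ((↑(T.M α)⁻¹ : T.Δ)) * (T.M α : T.Δ) = 1 := Units.inv_mul _
    have h2 := T.v_mul _ _ hMine hMne
    rw [h1, v_one T, T.v_M] at h2
    exact eq_neg_of_add_eq_zero_left h2.symm
  rw [T.v_mul _ _ hMine (mul_ne_zero hd0 hMne), T.v_mul _ _ hd0 hMne, hvi, T.v_M]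
  abel

lemma scmul (c : k) (z w : T.Δ) : z * (T.ι c * w) = T.ι c * (z * w) := by
  rw [← mul_assoc, ← T.central, mul_assoc]

lemma mul_form {a a' : k} (α α' : Fin (2 * r) → ℤ) {d d' : T.Δ}
    (hd : Pos T d) (hd' : Pos T d') :
    ∃ (e : ℤ) (D : T.Δ), Pos T D ∧
      (T.ι a * (T.M α : T.Δ) * (1 + d)) * (T.ι a' * (T.M α' : T.Δ) * (1 + d'))
        = T.ι (ω ^ e * a * a') * (T.M (α + α') : T.Δ) * (1 + D) := by
  obtain ⟨e, hMM⟩ := T.M_twist α α'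
  set d'' : T.Δ := (↑(T.M α')⁻¹ : T.Δ) * (d * (T.M α' : T.Δ)) with hd''def
  have hposd'' : Pos T d'' := by
    by_cases hd0 : d = 0
    · left; simp [hd''def, hd0]
    rcases hd with rfl | hdp
    · exact absurd rfl hd0
    · right; rw [hd''def, v_conj T α' hd0]; exact hdp
  have hcomm : (1 + d) * (T.M α' : T.Δ) = (T.M α' : T.Δ) * (1 + d'') := by
    rw [add_mul, one_mul, mul_add, mul_one, hd''def, Units.mul_inv_cancel_left]
  refine ⟨e, d'' + d' + d'' * d',
    pos_add T (pos_add T hposd'' hd') (pos_mul T hposd'' hd'), ?_⟩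
  have hDexp : (1 + d'') * (1 + d') = 1 + (d'' + d' + d'' * d') := by noncomm_ring
  have hMMc : (T.M α : T.Δ) * (T.M α' : T.Δ) = T.ι (ω ^ e) * (T.M (α + α') : T.Δ) := by
    calc (T.M α : T.Δ) * (T.M α' : T.Δ) = ((T.M α * T.M α' : T.Δˣ) : T.Δ) :=
          (Units.val_mul _ _).symm
      _ = ((T.ωu ^ e * T.M (α + α') : T.Δˣ) : T.Δ) := by rw [hMM]
      _ = ((T.ωu : T.Δ) ^ e) * (T.M (α + α') : T.Δ) := by
          rw [Units.val_mul, Units.val_zpow_eq_zpow_val]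
      _ = T.ι (ω ^ e) * (T.M (α + α') : T.Δ) := by rw [T.hωu, ← map_zpow₀]
  have hinner : (1 + d) * ((T.M α' : T.Δ) * (1 + d'))
      = (T.M α' : T.Δ) * ((1 + d'') * (1 + d')) := by
    rw [← mul_assoc, hcomm, mul_assoc]
  have houter : ∀ X : T.Δ, (T.M α : T.Δ) * ((T.M α' : T.Δ) * X)
      = T.ι (ω ^ e) * ((T.M (α + α') : T.Δ) * X) := fun X => by
    rw [← mul_assoc, hMMc, mul_assoc]
  calc (T.ι a * (T.M α : T.Δ) * (1 + d)) * (T.ι a' * (T.M α' : T.Δ) * (1 + d'))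
      = T.ι a * ((T.M α : T.Δ) * ((1 + d) * (T.ι a' * ((T.M α' : T.Δ) * (1 + d'))))) := by
        simp only [mul_assoc]
    _ = T.ι a * (T.ι a' * ((T.M α : T.Δ) * ((1 + d) * ((T.M α' : T.Δ) * (1 + d'))))) := by
        rw [scmul T a', scmul T a']
    _ = T.ι a * (T.ι a' * ((T.M α : T.Δ) * ((T.M α' : T.Δ) * ((1 + d'') * (1 + d'))))) := by
        rw [hinner]
    _ = T.ι a * (T.ι a' * (T.ι (ω ^ e) * ((T.M (α + α') : T.Δ) * ((1 + d'') * (1 + d'))))) := by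
        rw [houter]
    _ = T.ι (ω ^ e * a * a') * (T.M (α + α') : T.Δ) * (1 + (d'' + d' + d'' * d')) := by
        simp only [map_mul, mul_assoc, hDexp]
        rw [scmul T (ω ^ e), scmul T (ω ^ e)]

lemma v_form {a : k} (ha : a ≠ 0) (α : Fin (2 * r) → ℤ) {d : T.Δ} (hd : Pos T d) :
    T.v (T.ι a * (T.M α : T.Δ) * (1 + d)) = toLex α := by
  have h1 : T.ι a * (T.M α : T.Δ) ≠ 0 := mul_ne_zero (ι_ne_zero T ha) (Units.ne_zero _)
  rw [T.v_mul _ _ h1 (one_add_ne_zero T hd), v_one_add T hd,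
    T.v_mul _ _ (ι_ne_zero T ha) (Units.ne_zero _), T.v_scalar a ha, T.v_M, zero_add, add_zero]

lemma scalar_unique {a a' : k} (ha : a ≠ 0) (ha' : a' ≠ 0) {α α' : Fin (2 * r) → ℤ}
    {d d' : T.Δ} (hd : Pos T d) (hd' : Pos T d')
    (h : T.ι a * (T.M α : T.Δ) * (1 + d) = T.ι a' * (T.M α' : T.Δ) * (1 + d')) : a = a' := by
  have hα : α = α' := by
    have h1 := congrArg T.v h
    rw [v_form T ha α hd, v_form T ha' α' hd'] at h1
    exact toLex.injective h1
  subst hα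
  have h2 : (T.M α : T.Δ) * (T.ι a * (1 + d)) = (T.M α : T.Δ) * (T.ι a' * (1 + d')) := by
    rw [← mul_assoc, ← T.central, h, T.central, mul_assoc]
  have h3 : T.ι a * (1 + d) = T.ι a' * (1 + d') :=
    mul_left_cancel₀ (Units.ne_zero (T.M α)) h2
  by_contra hne
  have h4 : T.ι a + T.ι a * d = T.ι a' + T.ι a' * d' := by
    rwa [mul_add, mul_add, mul_one, mul_one] at h3
  have hsub : T.ι (a - a') = T.ι a' * d' + T.ι (-a) * d := by
    rw [map_sub, map_neg, neg_mul, ← sub_eq_add_neg, sub_eq_sub_iff_add_eq_add,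
      add_comm (T.ι a' * d')]
    exact h4
  have hP : Pos T (T.ι (a - a')) := by
    rw [hsub]; exact pos_add T (pos_smul T a' hd') (pos_smul T (-a) hd)
  rcases hP with h5 | h5
  · exact hne (sub_eq_zero.mp (T.ι.injective (by simpa using h5)))
  · have h6 : T.v (T.ι (a - a')) = 0 := T.v_scalar _ (sub_ne_zero.mpr hne)
    rw [h6] at h5
    exact lt_irrefl _ h5

end Aux

/-- In `Δ = Δ_{2r}(k; n₁,…,n_r)` (with `ω = ω_m` a primitive `m`-th root
of unity, `m = lcm(nᵢ)`), no primitive root of unity in `k` of order strictly greater than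
`m` is a multiplicative commutator in `Δ*`.  (In particular, when all `nᵢ = p`, the root
`ω_{p²}` is not of the form `t a t⁻¹ a⁻¹`.) -/
theorem root_of_unity_not_commutator (k : Type*) [Field k] (r m q : ℕ) (hm : 0 < m)
    (ω : k) (hω : IsPrimitiveRoot ω m) (T : TwistedLaurentValuedModel k r ω)
    (ζ : k) (hζ : IsPrimitiveRoot ζ q) (hq : m < q) :
    ¬ ∃ t a : T.Δˣ, T.ι ζ = ((t * a * t⁻¹ * a⁻¹ : T.Δˣ) : T.Δ) := by
  rintro ⟨t, a, hcomm⟩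
  have hω0 : ω ≠ 0 := hω.ne_zero hm.ne'
  have hq0 : q ≠ 0 := by omega
  have hζ0 : ζ ≠ 0 := hζ.ne_zero hq0
  obtain ⟨a₁, α₁, d₁, hd₁, ht⟩ := T.factor t
  obtain ⟨a₂, α₂, d₂, hd₂, ha⟩ := T.factor a
  obtain ⟨b₁, β₁, e₁, he₁, hti⟩ := T.factor t⁻¹
  obtain ⟨b₂, β₂, e₂, he₂, hai⟩ := T.factor a⁻¹
  have ha₁ : a₁ ≠ 0 := by
    rintro rfl; exact Units.ne_zero t (by rw [ht, map_zero, zero_mul, zero_mul])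
  have ha₂ : a₂ ≠ 0 := by
    rintro rfl; exact Units.ne_zero a (by rw [ha, map_zero, zero_mul, zero_mul])
  have hb₁ : b₁ ≠ 0 := by
    rintro rfl; exact Units.ne_zero t⁻¹ (by rw [hti, map_zero, zero_mul, zero_mul])
  have hb₂ : b₂ ≠ 0 := by
    rintro rfl; exact Units.ne_zero a⁻¹ (by rw [hai, map_zero, zero_mul, zero_mul])
  obtain ⟨e₀, h00⟩ := T.M_twist 0 0
  rw [add_zero] at h00
  have h00' : T.M 0 = T.ωu ^ e₀ := mul_right_cancel h00
  have hM0 : ((T.M 0 : T.Δˣ) : T.Δ) = T.ι (ω ^ e₀) := by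
    rw [h00', Units.val_zpow_eq_zpow_val, T.hωu, ← map_zpow₀]
  have hone : (1 : T.Δ) = T.ι (ω ^ (-e₀)) * (T.M 0 : T.Δ) * (1 + 0) := by
    rw [add_zero, mul_one, hM0, ← map_mul, ← zpow_add₀ hω0]
    simp
  have pair : ∀ (u : T.Δˣ) (c c' : k), c ≠ 0 → c' ≠ 0 →
      ∀ (γ γ' : Fin (2 * r) → ℤ) (f f' : T.Δ), Pos T f → Pos T f' →
      ((u : T.Δ) = T.ι c * (T.M γ : T.Δ) * (1 + f)) →
      (((u⁻¹ : T.Δˣ) : T.Δ) = T.ι c' * (T.M γ' : T.Δ) * (1 + f')) →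
      ∃ j : ℤ, c * c' = ω ^ j := by
    intro u c c' hc hc' γ γ' f f' hf hf' hu hu'
    obtain ⟨e, D, hD, hmul⟩ := mul_form T (a := c) (a' := c') γ γ' hf hf'
    have h1 : (1 : T.Δ) = T.ι (ω ^ e * c * c') * (T.M (γ + γ') : T.Δ) * (1 + D) := by
      rw [← hmul, ← hu, ← hu']
      exact (Units.mul_inv u).symm
    have h2 : ω ^ e * c * c' = ω ^ (-e₀) :=
      scalar_unique T (mul_ne_zero (mul_ne_zero (zpow_ne_zero e hω0) hc) hc')
        (zpow_ne_zero _ hω0) hD (Or.inl rfl) (h1.symm.trans hone)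
    refine ⟨-e + -e₀, ?_⟩
    have h3 : c * c' = (ω ^ e)⁻¹ * ω ^ (-e₀) := by
      rw [← h2, ← mul_assoc, ← mul_assoc, inv_mul_cancel₀ (zpow_ne_zero e hω0), one_mul]
    rw [h3, ← zpow_neg, ← zpow_add₀ hω0]
  obtain ⟨j₁, hj₁⟩ := pair t a₁ b₁ ha₁ hb₁ α₁ β₁ d₁ e₁ hd₁ he₁ ht hti
  obtain ⟨j₂, hj₂⟩ := pair a a₂ b₂ ha₂ hb₂ α₂ β₂ d₂ e₂ hd₂ he₂ ha hai
  obtain ⟨f₁, D₁, hD₁, hP₁⟩ := mul_form T (a := a₁) (a' := a₂) α₁ α₂ hd₁ hd₂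
  have hta : ((t * a : T.Δˣ) : T.Δ)
      = T.ι (ω ^ f₁ * a₁ * a₂) * (T.M (α₁ + α₂) : T.Δ) * (1 + D₁) := by
    rw [Units.val_mul, ht, ha, hP₁]
  obtain ⟨f₂, D₂, hD₂, hP₂⟩ :=
    mul_form T (a := ω ^ f₁ * a₁ * a₂) (a' := b₁) (α₁ + α₂) β₁ hD₁ he₁
  have htat : ((t * a * t⁻¹ : T.Δˣ) : T.Δ)
      = T.ι (ω ^ f₂ * (ω ^ f₁ * a₁ * a₂) * b₁) * (T.M ((α₁ + α₂) + β₁) : T.Δ) * (1 + D₂) := by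
    rw [Units.val_mul, hta, hti, hP₂]
  obtain ⟨f₃, D₃, hD₃, hP₃⟩ :=
    mul_form T (a := ω ^ f₂ * (ω ^ f₁ * a₁ * a₂) * b₁) (a' := b₂) ((α₁ + α₂) + β₁) β₂ hD₂ he₂
  have hfull : T.ι ζ
      = T.ι (ω ^ f₃ * (ω ^ f₂ * (ω ^ f₁ * a₁ * a₂) * b₁) * b₂)
        * (T.M (((α₁ + α₂) + β₁) + β₂) : T.Δ) * (1 + D₃) := by
    rw [hcomm, Units.val_mul, htat, hai, hP₃]
  set s := ω ^ f₃ * (ω ^ f₂ * (ω ^ f₁ * a₁ * a₂) * b₁) * b₂ with hs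
  have hsval : s = ω ^ (f₁ + f₂ + f₃ + j₁ + j₂) := by
    rw [hs, zpow_add₀ hω0, zpow_add₀ hω0, zpow_add₀ hω0, zpow_add₀ hω0, ← hj₁, ← hj₂]
    ring
  have hs0 : s ≠ 0 := by rw [hsval]; exact zpow_ne_zero _ hω0
  have hvz : toLex ((((α₁ + α₂) + β₁) + β₂)) = 0 := by
    have h1 := congrArg T.v hfull
    rw [T.v_scalar ζ hζ0, v_form T hs0 _ hD₃] at h1
    exact h1.symm
  have hγ0 : (((α₁ + α₂) + β₁) + β₂) = 0 := toLex.injective hvz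
  rw [hγ0, hM0, ← map_mul] at hfull
  set w := s * ω ^ e₀ with hw
  have hw0 : w ≠ 0 := mul_ne_zero hs0 (zpow_ne_zero _ hω0)
  have hζw : ζ = w := by
    by_cases hD0 : D₃ = 0
    · rw [hD0, add_zero, mul_one] at hfull
      exact T.ι.injective hfull
    rcases hD₃ with h | hpos
    · exact absurd h hD0
    by_contra hne
    have hsub : T.ι (ζ - w) = T.ι w * D₃ := by
      rw [map_sub, hfull, mul_add, mul_one, add_sub_cancel_left]
    have h7 : T.v (T.ι (ζ - w)) = 0 := T.v_scalar _ (sub_ne_zero.mpr hne)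
    rw [hsub, v_smul T hw0 hD0] at h7
    rw [h7] at hpos
    exact lt_irrefl _ hpos
  have hwval : w = ω ^ (f₁ + f₂ + f₃ + j₁ + j₂ + e₀) := by
    rw [hw, hsval, ← zpow_add₀ hω0]
  have hζm : ζ ^ m = 1 := by
    rw [hζw, hwval, ← zpow_natCast (ω ^ (f₁ + f₂ + f₃ + j₁ + j₂ + e₀)) m, ← zpow_mul,
      mul_comm (f₁ + f₂ + f₃ + j₁ + j₂ + e₀) (m : ℤ), zpow_mul, zpow_natCast,
      hω.pow_eq_one, one_zpow]
  have hdvd : q ∣ m := hζ.dvd_of_pow_eq_one m hζm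
  exact absurd (Nat.le_of_dvd hm hdvd) (not_le.mpr hq)

end AmitsurNote
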